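/- Let 𝒜 ⊆ E^∞, x⃗ a finite block sequence, and X, Y block subspaces with Y ⊆* X. If II has a strategy in the relational game A_X(x⃗) to play in 𝒜, then II has a strategy in A_Y(x⃗) to play in 𝒜. -/

import Mathlib

section Defs

variable {𝔽 : Type} [Field 𝔽] {E : Type} [AddCommGroup E] [Module 𝔽 E]

/-- The support of a vector with respect to the basis `b`. -/
noncomputable def supp (b : Module.Basis ℕ 𝔽 E) (x : E) : Finset ℕ :=
  (b.repr x).support

/-- `VecLt b x y` means `x < y`: every element of the support of `x` is smaller than
every element of the support of `y`. -/
def VecLt (b : Module.Basis ℕ 𝔽 E) (x y : E) : Prop :=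
  ∀ m ∈ supp b x, ∀ n ∈ supp b y, m < n

/-- `NatLt b k x` means `k < x`: `k` is smaller than every element of the support of `x`. -/
def NatLt (b : Module.Basis ℕ 𝔽 E) (k : ℕ) (x : E) : Prop :=
  ∀ n ∈ supp b x, k < n

/-- An infinite block sequence: a sequence of nonzero vectors with `x n < x (n + 1)`. -/
def IsBlockSeq (b : Module.Basis ℕ 𝔽 E) (x : ℕ → E) : Prop :=
  (∀ n, x n ≠ 0) ∧ ∀ n, VecLt b (x n) (x (n + 1))

/-- A finite block sequence: a list of nonzero vectors, consecutively increasing in the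
block ordering. -/
def IsFinBlockSeq (b : Module.Basis ℕ 𝔽 E) (l : List E) : Prop :=
  (∀ x ∈ l, x ≠ 0) ∧ l.Chain' (VecLt b)

/-- A block subspace: a subspace spanned by an infinite block sequence. -/
def IsBlockSubspace (b : Module.Basis ℕ 𝔽 E) (X : Submodule 𝔽 E) : Prop :=
  ∃ y : ℕ → E, IsBlockSeq b y ∧ X = Submodule.span 𝔽 (Set.range y)

/-- The list of the first `n` values of a sequence. -/
def hist {α : Type _} (x : ℕ → α) (n : ℕ) : List α :=
  List.ofFn (fun j : Fin n => x j)

/-- The concatenation of a finite prefix with an infinite sequence. -/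
def prefCat {α : Type _} (l : List α) (x : ℕ → α) : ℕ → α := fun n =>
  if h : n < l.length then l.get ⟨n, h⟩ else x (n - l.length)

/-- `Y ⊆* X`: `Y` is spanned by an infinite block sequence all but finitely many of
whose terms belong to `X`. -/
def SubsetStar (b : Module.Basis ℕ 𝔽 E) (Y X : Submodule 𝔽 E) : Prop :=
  ∃ y : ℕ → E, IsBlockSeq b y ∧ Y = Submodule.span 𝔽 (Set.range y) ∧
    ∃ N : ℕ, ∀ m, N ≤ m → y m ∈ X

/-- The interleaving `x 0, y 0, x 1, y 1, …` of two sequences. -/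
def interleave {α : Type _} (x y : ℕ → α) : ℕ → α := fun k =>
  if k % 2 = 0 then x (k / 2) else y (k / 2)

/-- Helper: the sequence of integers produced by a strategy answering plays
`p i : E × Submodule 𝔽 E` with a vector and an integer, starting with `n0`. -/
def natsA (n0 : ℕ) (σ : List (E × Submodule 𝔽 E) → E × ℕ)
    (p : ℕ → E × Submodule 𝔽 E) : ℕ → ℕ
  | 0 => n0
  | k + 1 => (σ (hist p (k + 1))).2

/-- Player II has a strategy in the relational game `A_X(pre)` to play in `A`
(case of an even-length prefix): II opens with an integer `n0`; I plays nonzero vectors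
`x i ∈ X` with `n i < x i`, forming a block sequence, together with block subspaces
`Z i ≤ X`; II answers with a nonzero vector `y i ∈ Z i` (II's vectors forming a block
sequence) and the next integer `n (i+1)`, the integers being strictly increasing.  The
outcome is `pre` followed by `x 0, y 0, x 1, y 1, …`. -/
def IIWinsAEven (b : Module.Basis ℕ 𝔽 E) (X : Submodule 𝔽 E) (pre : List E)
    (A : Set (ℕ → E)) : Prop :=
  ∃ (n0 : ℕ) (σ : List (E × Submodule 𝔽 E) → E × ℕ),
    ∀ p : ℕ → E × Submodule 𝔽 E,
      (∀ i, (p i).1 ∈ X ∧ (p i).1 ≠ 0 ∧ NatLt b (natsA n0 σ p i) (p i).1 ∧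
          VecLt b (p i).1 (p (i + 1)).1 ∧ IsBlockSubspace b (p i).2 ∧ (p i).2 ≤ X) →
      (∀ i, (σ (hist p (i + 1))).1 ∈ (p i).2 ∧ (σ (hist p (i + 1))).1 ≠ 0 ∧
          VecLt b (σ (hist p (i + 1))).1 (σ (hist p (i + 2))).1 ∧
          natsA n0 σ p i < natsA n0 σ p (i + 1)) ∧
        prefCat pre
          (interleave (fun i => (p i).1) (fun i => (σ (hist p (i + 1))).1)) ∈ A

/-- Player II has a strategy in the relational game `A_X(pre)` to play in `A`
(case of an odd-length prefix): I plays block subspaces `Z i ≤ X` together with nonzero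
vectors `x i ∈ X` (to accompany `Z (i+1)`) with `n i < x i`, the `x i` forming a block
sequence; II answers `Z i` with a nonzero vector `y i ∈ Z i` (II's vectors forming a
block sequence) and a strictly increasing integer `n i`.  The outcome is `pre` followed
by `y 0, x 0, y 1, x 1, …`. -/
def IIWinsAOdd (b : Module.Basis ℕ 𝔽 E) (X : Submodule 𝔽 E) (pre : List E)
    (A : Set (ℕ → E)) : Prop :=
  ∃ σ : List (Submodule 𝔽 E × E) → Submodule 𝔽 E → E × ℕ,
    ∀ (Z : ℕ → Submodule 𝔽 E) (x : ℕ → E),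
      (∀ i, IsBlockSubspace b (Z i) ∧ Z i ≤ X ∧ x i ∈ X ∧ x i ≠ 0 ∧
          NatLt b (σ (hist (fun j => (Z j, x j)) i) (Z i)).2 (x i) ∧
          VecLt b (x i) (x (i + 1))) →
      (∀ i, (σ (hist (fun j => (Z j, x j)) i) (Z i)).1 ∈ Z i ∧
          (σ (hist (fun j => (Z j, x j)) i) (Z i)).1 ≠ 0 ∧
          VecLt b (σ (hist (fun j => (Z j, x j)) i) (Z i)).1
            (σ (hist (fun j => (Z j, x j)) (i + 1)) (Z (i + 1))).1 ∧
          (σ (hist (fun j => (Z j, x j)) i) (Z i)).2 <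
            (σ (hist (fun j => (Z j, x j)) (i + 1)) (Z (i + 1))).2) ∧
        prefCat pre
          (interleave (fun i => (σ (hist (fun j => (Z j, x j)) i) (Z i)).1) x) ∈ A

/-- Player II has a strategy in the relational game `A_X(pre)` to play in `A`. -/
def IIWinsA (b : Module.Basis ℕ 𝔽 E) (X : Submodule 𝔽 E) (pre : List E)
    (A : Set (ℕ → E)) : Prop :=
  if pre.length % 2 = 0 then IIWinsAEven b X pre A else IIWinsAOdd b X pre A

end Defs
section Helpers
variable {𝔽 : Type} [Field 𝔽] {E : Type} [AddCommGroup E] [Module 𝔽 E]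

lemma supp_nonempty (b : Module.Basis ℕ 𝔽 E) {x : E} (hx : x ≠ 0) : (supp b x).Nonempty := by
  rw [supp, Finsupp.support_nonempty_iff]
  simpa using hx

lemma vecLt_trans (b : Module.Basis ℕ 𝔽 E) {x y z : E} (hy : y ≠ 0)
    (h1 : VecLt b x y) (h2 : VecLt b y z) : VecLt b x z := by
  obtain ⟨a, ha⟩ := supp_nonempty b hy
  intro m hm n hn
  exact (h1 m hm a ha).trans (h2 a ha n hn)

lemma blockSeq_vecLt (b : Module.Basis ℕ 𝔽 E) {z : ℕ → E} (hz : IsBlockSeq b z)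
    {i j : ℕ} (h : i < j) : VecLt b (z i) (z j) := by
  induction j with
  | zero => omega
  | succ j ih =>
    rcases Nat.lt_succ_iff_lt_or_eq.1 h with h' | h'
    · exact vecLt_trans b (hz.1 j) (ih h') (hz.2 j)
    · subst h'; exact hz.2 i

lemma blockSeq_le_supp (b : Module.Basis ℕ 𝔽 E) {z : ℕ → E} (hz : IsBlockSeq b z) :
    ∀ j, ∀ n ∈ supp b (z j), j ≤ n := by
  intro j
  induction j with
  | zero => intro n _; omega
  | succ j ih =>
    intro n hn
    obtain ⟨a, ha⟩ := supp_nonempty b (hz.1 j)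
    have := hz.2 j a ha n hn
    have := ih a ha
    omega

end Helpers
section Key
variable {𝔽 : Type} [Field 𝔽] {E : Type} [AddCommGroup E] [Module 𝔽 E]

lemma exists_K (b : Module.Basis ℕ 𝔽 E) {Y X : Submodule 𝔽 E} (hYX : SubsetStar b Y X) :
    ∃ K : ℕ, ∀ v ∈ Y, NatLt b K v → v ∈ X := by
  obtain ⟨y, hy, rfl, N, hN⟩ := hYX
  rcases N with _ | N
  · refine ⟨0, fun v hv _ => ?_⟩
    refine Submodule.span_le.2 ?_ hv
    rintro _ ⟨m, rfl⟩
    exact hN m (Nat.zero_le m)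
  · have hne := supp_nonempty b (hy.1 N)
    set K := (supp b (y N)).max' hne with hKdef
    refine ⟨K, fun v hv hvK => ?_⟩
    have hsplit : Set.range y = y '' {m | m < N + 1} ∪ y '' {m | N + 1 ≤ m} := by
      have huniv : {m : ℕ | m < N + 1} ∪ {m : ℕ | N + 1 ≤ m} = Set.univ := by
        ext m
        simp only [Set.mem_union, Set.mem_setOf_eq, Set.mem_univ, iff_true]
        omega
      rw [← Set.image_union, huniv, Set.image_univ]
    set Low : Submodule 𝔽 E :=
      Submodule.comap (b.repr : E →ₗ[𝔽] ℕ →₀ 𝔽) (Finsupp.supported 𝔽 𝔽 {n | n ≤ K}) with hLow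
    set High : Submodule 𝔽 E :=
      Submodule.comap (b.repr : E →ₗ[𝔽] ℕ →₀ 𝔽) (Finsupp.supported 𝔽 𝔽 {n | K < n}) with hHigh
    have hS : Submodule.span 𝔽 (y '' {m | m < N + 1}) ≤ Low := by
      rw [Submodule.span_le]
      rintro _ ⟨m, hm, rfl⟩
      intro n hn
      simp only [Set.mem_setOf_eq]
      rcases Nat.lt_succ_iff_lt_or_eq.1 hm with h' | h'
      · exact le_of_lt ((blockSeq_vecLt b hy h') n hn K ((supp b (y N)).max'_mem hne))
      · subst h'; exact Finset.le_max' _ n hn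
    have hT : Submodule.span 𝔽 (y '' {m | N + 1 ≤ m}) ≤ X ⊓ High := by
      rw [Submodule.span_le]
      rintro _ ⟨m, hm, rfl⟩
      refine ⟨hN m hm, ?_⟩
      intro n hn
      exact (blockSeq_vecLt b hy (Nat.lt_of_succ_le hm)) K ((supp b (y N)).max'_mem hne) n hn
    rw [hsplit, Submodule.span_union] at hv
    obtain ⟨u, hu, w, hw, rfl⟩ := Submodule.mem_sup.1 hv
    have hu0 : u = 0 := by
      have hrepr : b.repr u = 0 := by
        ext n
        by_cases hn : n ≤ K
        · have h1 : b.repr (u + w) n = 0 := by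
            by_contra hc
            exact absurd (hvK n (Finsupp.mem_support_iff.2 hc)) (by omega)
          have h2 : b.repr w n = 0 := by
            by_contra hc
            have := (hT hw).2 (Finsupp.mem_support_iff.2 hc)
            simp only [Set.mem_setOf_eq] at this
            omega
          rw [map_add] at h1
          simp only [Finsupp.add_apply] at h1
          simpa [h2] using h1
        · by_contra hc
          have := hS hu (Finsupp.mem_support_iff.2 hc)
          simp only [Set.mem_setOf_eq] at this
          omega
      simpa using b.repr.map_eq_zero_iff.1 hrepr
    rw [hu0, zero_add]
    exact (hT hw).1

end Key
section Trunc
variable {𝔽 : Type} [Field 𝔽] {E : Type} [AddCommGroup E] [Module 𝔽 E]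

open Classical in
/-- Truncation of a block subspace: span of the tail (beyond index `K`) of a chosen
spanning block sequence. -/
noncomputable def trunc (b : Module.Basis ℕ 𝔽 E) (K : ℕ) (Z : Submodule 𝔽 E) : Submodule 𝔽 E :=
  if h : IsBlockSubspace b Z then
    Submodule.span 𝔽 (Set.range fun m => h.choose (m + K + 1))
  else Z

lemma trunc_le (b : Module.Basis ℕ 𝔽 E) (K : ℕ) {Z : Submodule 𝔽 E}
    (hZ : IsBlockSubspace b Z) : trunc b K Z ≤ Z := by
  rw [trunc, dif_pos hZ, Submodule.span_le]
  rintro _ ⟨m, rfl⟩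
  have hm : hZ.choose (m + K + 1) ∈ Submodule.span 𝔽 (Set.range hZ.choose) :=
    Submodule.subset_span ⟨m + K + 1, rfl⟩
  rwa [← hZ.choose_spec.2] at hm

lemma trunc_isBlock (b : Module.Basis ℕ 𝔽 E) (K : ℕ) {Z : Submodule 𝔽 E}
    (hZ : IsBlockSubspace b Z) : IsBlockSubspace b (trunc b K Z) := by
  rw [trunc, dif_pos hZ]
  refine ⟨fun m => hZ.choose (m + K + 1), ⟨fun m => hZ.choose_spec.1.1 _, fun m => ?_⟩, rfl⟩
  exact blockSeq_vecLt b hZ.choose_spec.1 (by omega)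

lemma trunc_le_of_natLt (b : Module.Basis ℕ 𝔽 E) (K : ℕ) {X Y Z : Submodule 𝔽 E}
    (hK : ∀ v ∈ Y, NatLt b K v → v ∈ X)
    (hZ : IsBlockSubspace b Z) (hZY : Z ≤ Y) : trunc b K Z ≤ X := by
  rw [trunc, dif_pos hZ, Submodule.span_le]
  rintro _ ⟨m, rfl⟩
  refine hK _ (hZY (trunc_le b K hZ (by
    rw [trunc, dif_pos hZ]; exact Submodule.subset_span ⟨m, rfl⟩))) ?_
  intro n hn
  have := blockSeq_le_supp b hZ.choose_spec.1 (m + K + 1) n hn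
  omega

end Trunc
section Transfer
variable {𝔽 : Type} [Field 𝔽] {E : Type} [AddCommGroup E] [Module 𝔽 E]

lemma even_transfer (b : Module.Basis ℕ 𝔽 E) {X Y : Submodule 𝔽 E} (K : ℕ)
    (hK : ∀ v ∈ Y, NatLt b K v → v ∈ X)
    (pre : List E) (A : Set (ℕ → E))
    (h : IIWinsAEven b X pre A) : IIWinsAEven b Y pre A := by
  obtain ⟨n0, σ, hσ⟩ := h
  set f : E × Submodule 𝔽 E → E × Submodule 𝔽 E := fun q => (q.1, trunc b K q.2) with hf
  set σ' : List (E × Submodule 𝔽 E) → E × ℕ :=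
    fun l => ((σ (l.map f)).1, (σ (l.map f)).2 + (K + 1)) with hσ'
  refine ⟨n0 + (K + 1), σ', ?_⟩
  intro p hp
  set p' : ℕ → E × Submodule 𝔽 E := fun i => f (p i) with hp'
  have hhist : ∀ n, (hist p n).map f = hist p' n := by
    intro n
    simp only [hist, List.map_ofFn]
    rfl
  have hs1 : ∀ n, (σ' (hist p n)).1 = (σ (hist p' n)).1 := by
    intro n; show (σ ((hist p n).map f)).1 = _; rw [hhist]
  have hs2 : ∀ n, (σ' (hist p n)).2 = (σ (hist p' n)).2 + (K + 1) := by
    intro n; show (σ ((hist p n).map f)).2 + (K + 1) = _; rw [hhist]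
  have hnats : ∀ i, natsA (n0 + (K + 1)) σ' p i = natsA n0 σ p' i + (K + 1) := by
    intro i
    cases i with
    | zero => rfl
    | succ k => rw [natsA, natsA, hs2]
  have hvalid : ∀ i, (p' i).1 ∈ X ∧ (p' i).1 ≠ 0 ∧ NatLt b (natsA n0 σ p' i) (p' i).1 ∧
      VecLt b (p' i).1 (p' (i + 1)).1 ∧ IsBlockSubspace b (p' i).2 ∧ (p' i).2 ≤ X := by
    intro i
    obtain ⟨h1, h2, h3, h4, h5, h6⟩ := hp i
    rw [hnats i] at h3
    refine ⟨?_, h2, ?_, h4, trunc_isBlock b K h5, trunc_le_of_natLt b K hK h5 h6⟩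
    · refine hK _ h1 ?_
      intro n hn
      have := h3 n hn
      omega
    · intro n hn
      have := h3 n hn
      omega
  obtain ⟨hcond, hA⟩ := hσ p' hvalid
  constructor
  · intro i
    obtain ⟨c1, c2, c3, c4⟩ := hcond i
    refine ⟨?_, ?_, ?_, ?_⟩
    · rw [hs1]
      exact trunc_le b K (hp i).2.2.2.2.1 c1
    · rw [hs1]; exact c2
    · rw [hs1, hs1]; exact c3
    · rw [hnats, hnats]; omega
  · have e1 : (fun i => (p i).1) = fun i => (p' i).1 := rfl
    have e2 : (fun i => (σ' (hist p (i + 1))).1) = fun i => (σ (hist p' (i + 1))).1 :=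
      funext fun i => hs1 (i + 1)
    rw [e1, e2]
    exact hA

lemma odd_transfer (b : Module.Basis ℕ 𝔽 E) {X Y : Submodule 𝔽 E} (K : ℕ)
    (hK : ∀ v ∈ Y, NatLt b K v → v ∈ X)
    (pre : List E) (A : Set (ℕ → E))
    (h : IIWinsAOdd b X pre A) : IIWinsAOdd b Y pre A := by
  obtain ⟨σ, hσ⟩ := h
  set f : Submodule 𝔽 E × E → Submodule 𝔽 E × E := fun q => (trunc b K q.1, q.2) with hf
  set σ' : List (Submodule 𝔽 E × E) → Submodule 𝔽 E → E × ℕ :=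
    fun l Z => ((σ (l.map f) (trunc b K Z)).1, (σ (l.map f) (trunc b K Z)).2 + (K + 1))
    with hσ'
  refine ⟨σ', ?_⟩
  intro Z x hp
  set Z' : ℕ → Submodule 𝔽 E := fun i => trunc b K (Z i) with hZ'
  have hhist : ∀ n, (hist (fun j => (Z j, x j)) n).map f = hist (fun j => (Z' j, x j)) n := by
    intro n
    simp only [hist, List.map_ofFn]
    rfl
  have hs1 : ∀ n, (σ' (hist (fun j => (Z j, x j)) n) (Z n)).1 =
      (σ (hist (fun j => (Z' j, x j)) n) (Z' n)).1 := by
    intro n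
    show (σ ((hist (fun j => (Z j, x j)) n).map f) (trunc b K (Z n))).1 = _
    rw [hhist]
  have hs2 : ∀ n, (σ' (hist (fun j => (Z j, x j)) n) (Z n)).2 =
      (σ (hist (fun j => (Z' j, x j)) n) (Z' n)).2 + (K + 1) := by
    intro n
    show (σ ((hist (fun j => (Z j, x j)) n).map f) (trunc b K (Z n))).2 + (K + 1) = _
    rw [hhist]
  have hvalid : ∀ i, IsBlockSubspace b (Z' i) ∧ Z' i ≤ X ∧ x i ∈ X ∧ x i ≠ 0 ∧
      NatLt b (σ (hist (fun j => (Z' j, x j)) i) (Z' i)).2 (x i) ∧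
      VecLt b (x i) (x (i + 1)) := by
    intro i
    obtain ⟨h1, h2, h3, h4, h5, h6⟩ := hp i
    rw [hs2 i] at h5
    refine ⟨trunc_isBlock b K h1, trunc_le_of_natLt b K hK h1 h2, ?_, h4, ?_, h6⟩
    · refine hK _ h3 ?_
      intro n hn
      have := h5 n hn
      omega
    · intro n hn
      have := h5 n hn
      omega
  obtain ⟨hcond, hA⟩ := hσ Z' x hvalid
  constructor
  · intro i
    obtain ⟨c1, c2, c3, c4⟩ := hcond i
    refine ⟨?_, ?_, ?_, ?_⟩
    · rw [hs1]
      exact trunc_le b K (hp i).1 c1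
    · rw [hs1]; exact c2
    · rw [hs1, hs1]; exact c3
    · rw [hs2, hs2]; omega
  · have e1 : (fun i => (σ' (hist (fun j => (Z j, x j)) i) (Z i)).1) =
        fun i => (σ (hist (fun j => (Z' j, x j)) i) (Z' i)).1 := funext fun i => hs1 i
    rw [e1]
    exact hA

end Transfer
theorem IIWinsA_subsetStar
    {𝔽 : Type} [Field 𝔽] [Countable 𝔽]
    {E : Type} [AddCommGroup E] [Module 𝔽 E]
    (b : Module.Basis ℕ 𝔽 E) (A : Set (ℕ → E))
    (pre : List E) (hpre : IsFinBlockSeq b pre)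
    (X Y : Submodule 𝔽 E) (hX : IsBlockSubspace b X) (hY : IsBlockSubspace b Y)
    (hYX : SubsetStar b Y X) (h : IIWinsA b X pre A) :
    IIWinsA b Y pre A := by
  obtain ⟨K, hK⟩ := exists_K b hYX
  by_cases hp : pre.length % 2 = 0
  · rw [IIWinsA, if_pos hp] at h ⊢
    exact even_transfer b K hK pre A h
  · rw [IIWinsA, if_neg hp] at h ⊢
    exact odd_transfer b K hK pre A h
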